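/- If 𝒜, ℬ ⊆ M_n(ℂ) are homogeneously balanced unital *-subalgebras, then c(𝒜',ℬ') = (n² / (dim 𝒜 · dim ℬ)) · c(𝒜,ℬ), where c(𝒳,𝒴) := Tr(E_𝒳 E_𝒴). -/

import Mathlib

open Matrix BigOperators

noncomputable section
set_option linter.unusedSectionVars false
set_option maxHeartbeats 1000000
open scoped Kronecker

abbrev Mat (n : ℕ) := Matrix (Fin n) (Fin n) ℂ

/-- Two unital *-subalgebras of `M_n(ℂ)` are quasi-orthogonal iff
`τ(AB) = τ(A)τ(B)` for all members, where `τ = (1/n)Tr`. -/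
def QuasiOrth {n : ℕ} (𝒜 ℬ : StarSubalgebra ℂ (Mat n)) : Prop :=
  ∀ A ∈ 𝒜, ∀ B ∈ ℬ, (n : ℂ) * (A * B).trace = A.trace * B.trace

/-- `E` is the orthogonal projection of `M_n(ℂ)` (with the Hilbert–Schmidt inner
product `⟨X, Y⟩ = Tr(X*Y)`) onto the subspace `S`. -/
def IsHSProj {n : ℕ} (S : Submodule ℂ (Mat n)) (E : Mat n →ₗ[ℂ] Mat n) : Prop :=
  (∀ X, E X ∈ S) ∧ (∀ X ∈ S, E X = X) ∧
    (∀ X Y, (star (E X) * Y).trace = (star X * E Y).trace)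

/-- A unital *-subalgebra `𝒜 ⊆ M_n(ℂ)` is homogeneously balanced if, up to a
unitary conjugation and a reindexing, it is `⊕ₖ (M_{p k}(ℂ) ⊗ 1_{q k})` with the
ratio `p k / q k` independent of `k`. -/
def IsHomBalanced {n : ℕ} (𝒜 : StarSubalgebra ℂ (Mat n)) : Prop :=
  ∃ (ι : Type) (_ : Fintype ι) (_ : DecidableEq ι) (p q : ι → ℕ)
    (e : (Σ k : ι, Fin (p k) × Fin (q k)) ≃ Fin n) (U : Mat n),
      U * star U = 1 ∧ star U * U = 1 ∧
      (∀ k, 0 < p k ∧ 0 < q k) ∧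
      (∀ k l, p k * q l = p l * q k) ∧
      (∀ X : Mat n, X ∈ 𝒜 ↔
        ∃ A : ∀ k, Matrix (Fin (p k)) (Fin (p k)) ℂ,
          X = U * (Matrix.reindex e e (Matrix.blockDiagonal'
            (fun k => Matrix.kroneckerMap (· * ·) (A k)
              (1 : Matrix (Fin (q k)) (Fin (q k)) ℂ)))) * star U)

namespace Stmt18


variable {n : ℕ}

lemma trace_star_mul_conj (M N : Mat n) :
    (star M * N).trace = starRingEnd ℂ ((star N * M).trace) := by
  have h : star M * N = star (star N * M) := by rw [Matrix.star_mul, star_star]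
  rw [h]
  change (conjTranspose _).trace = _
  rw [Matrix.trace_conjTranspose]
  rfl

lemma eq_zero_of_trace_star_mul_self {Z : Mat n} (h : (star Z * Z).trace = 0) : Z = 0 := by
  have h2 : ((∑ j : Fin n, ∑ i : Fin n, Complex.normSq (Z i j) : ℝ) : ℂ) = 0 := by
    rw [← h]
    change _ = Matrix.trace (Z.conjTranspose * Z)
    simp only [Matrix.trace, Matrix.diag, Matrix.mul_apply, Matrix.conjTranspose_apply]
    push_cast
    refine Finset.sum_congr rfl fun j _ => Finset.sum_congr rfl fun i _ => ?_
    rw [Complex.star_def, ← Complex.normSq_eq_conj_mul_self]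
  rw [Complex.ofReal_eq_zero] at h2
  have h3 := (Finset.sum_eq_zero_iff_of_nonneg (fun j _ =>
    Finset.sum_nonneg fun i _ => Complex.normSq_nonneg _)).mp h2
  ext i j
  have h4 := (Finset.sum_eq_zero_iff_of_nonneg (fun i _ =>
    Complex.normSq_nonneg _)).mp (h3 j (Finset.mem_univ j)) i (Finset.mem_univ i)
  simpa using Complex.normSq_eq_zero.mp h4

lemma hsproj_unique {S : Submodule ℂ (Mat n)} {E F : Mat n →ₗ[ℂ] Mat n}
    (hE : IsHSProj S E) (hF : IsHSProj S F) : E = F := by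
  refine LinearMap.ext fun X => ?_
  have hZ : E X - F X ∈ S := sub_mem (hE.1 X) (hF.1 X)
  have h1 : (star (E X) * (E X - F X)).trace = (star X * (E X - F X)).trace := by
    rw [hE.2.2 X (E X - F X), hE.2.1 _ hZ]
  have h2 : (star (F X) * (E X - F X)).trace = (star X * (E X - F X)).trace := by
    rw [hF.2.2 X (E X - F X), hF.2.1 _ hZ]
  have h3 : (star (E X - F X) * (E X - F X)).trace = 0 := by
    rw [star_sub, sub_mul, Matrix.trace_sub, h1, h2, sub_self]
  have := eq_zero_of_trace_star_mul_self h3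
  exact sub_eq_zero.mp this

/-- `X ↦ P * X * Q`. -/
def lrm (P Q : Mat n) : Mat n →ₗ[ℂ] Mat n where
  toFun X := P * X * Q
  map_add' X Y := by simp [Matrix.mul_add, Matrix.add_mul]
  map_smul' c X := by simp [Matrix.mul_smul, Matrix.smul_mul]

/-- `X ↦ Tr(C* X) • D`. -/
def rko (C D : Mat n) : Mat n →ₗ[ℂ] Mat n where
  toFun X := (star C * X).trace • D
  map_add' X Y := by simp [Matrix.mul_add, add_smul]
  map_smul' c X := by simp [Matrix.mul_smul, smul_smul]

@[simp] lemma lrm_apply (P Q X : Mat n) : lrm P Q X = P * X * Q := rfl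
@[simp] lemma rko_apply (C D X : Mat n) : rko C D X = (star C * X).trace • D := rfl

lemma trace_endo (f : Mat n →ₗ[ℂ] Mat n) :
    LinearMap.trace ℂ (Mat n) f = ∑ p : Fin n × Fin n, (f (Matrix.single p.1 p.2 1)) p.1 p.2 := by
  rw [LinearMap.trace_eq_matrix_trace ℂ (Matrix.stdBasis ℂ (Fin n) (Fin n)) f]
  unfold Matrix.trace
  simp [diag, LinearMap.toMatrix_apply, Matrix.stdBasis_eq_single,
    Matrix.stdBasis, Module.Basis.repr_reindex, Pi.basis_repr, ← Matrix.single_eq_of_single_single]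

lemma trace_lrm (P Q : Mat n) :
    LinearMap.trace ℂ (Mat n) (lrm P Q) = P.trace * Q.trace := by
  rw [trace_endo]
  have h : ∀ p : Fin n × Fin n, (P * (Matrix.single p.1 p.2 1 : Mat n) * Q) p.1 p.2 = P p.1 p.1 * Q p.2 p.2 := by
    rintro ⟨a, b⟩
    rw [Matrix.mul_assoc]
    simp [Matrix.mul_apply, Matrix.single, Finset.mul_sum, ite_and, mul_comm]
  simp only [lrm_apply, h]
  rw [Fintype.sum_prod_type]
  simp [Matrix.trace, Matrix.diag, Finset.sum_mul_sum]

lemma trace_rko (C D : Mat n) :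
    LinearMap.trace ℂ (Mat n) (rko C D) = (star C * D).trace := by
  rw [trace_endo]
  have h : ∀ a b : Fin n, (star C * Matrix.single a b 1).trace = (star C) b a := by
    intro a b
    simp [Matrix.trace, Matrix.diag, Matrix.mul_apply, Matrix.single, ite_and]
  simp only [rko_apply, Matrix.smul_apply, smul_eq_mul]
  rw [Fintype.sum_prod_type]
  simp only [h]
  rw [Matrix.trace]
  simp [Matrix.diag, Matrix.mul_apply, mul_comm]
  rw [Finset.sum_comm]

lemma lrm_comp (P Q P' Q' : Mat n) :
    lrm P Q ∘ₗ lrm P' Q' = lrm (P * P') (Q' * Q) := by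
  ext X
  simp [Matrix.mul_assoc]

lemma rko_comp (C D C' D' : Mat n) :
    rko C D ∘ₗ rko C' D' = (star C * D').trace • rko C' D := by
  ext X
  simp [Matrix.mul_smul, smul_smul, mul_comm]
  ring




lemma kron_conjTranspose {l m o pp : Type*} (A : Matrix l m ℂ) (B : Matrix o pp ℂ) :
    (A ⊗ₖ B)ᴴ = Aᴴ ⊗ₖ Bᴴ := by
  ext ⟨i, j⟩ ⟨k, r⟩
  simp [conjTranspose_apply, kroneckerMap_apply, mul_comm]

lemma star_stdBasisMatrix {m : Type*} [DecidableEq m] (i j : m) :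
    (Matrix.single i j (1 : ℂ))ᴴ = Matrix.single j i 1 := by
  ext a b
  simp [conjTranspose_apply, Matrix.single, and_comm, apply_ite]

lemma trace_stdBasisMatrix_mul {m : Type*} [DecidableEq m] [Fintype m] (i j : m)
    (M : Matrix m m ℂ) : (Matrix.single i j (1 : ℂ) * M).trace = M j i := by
  simp [Matrix.trace, Matrix.diag, Matrix.mul_apply, Matrix.single, ite_and]

lemma sum_stdBasisMatrix_diag {m : Type*} [DecidableEq m] [Fintype m] :
    ∑ i : m, Matrix.single i i (1 : ℂ) = 1 := by
  ext a b
  rw [Matrix.sum_apply]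
  simp only [Matrix.single, of_apply]
  rcases eq_or_ne a b with rfl | h
  · rw [Finset.sum_eq_single a]
    · simp
    · intro x _ hx; simp [hx, Ne.symm hx]
    · simp
  · rw [Finset.sum_eq_zero, Matrix.one_apply_ne h]
    intro x _
    rw [if_neg]
    rintro ⟨rfl, rfl⟩
    exact h rfl

variable {ι : Type} [Fintype ι] [DecidableEq ι] (p q : ι → ℕ)

/-- `Pi.single` with the type family made explicit. -/
def Psing (k : ι) (C : Matrix (Fin (p k)) (Fin (p k)) ℂ) :
    (l : ι) → Matrix (Fin (p l)) (Fin (p l)) ℂ :=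
  Pi.single k C

lemma Psing_same (k : ι) (C : Matrix (Fin (p k)) (Fin (p k)) ℂ) : Psing p k C k = C := by
  simp [Psing]

lemma Psing_ne {k l : ι} (h : l ≠ k) (C : Matrix (Fin (p k)) (Fin (p k)) ℂ) :
    Psing p k C l = 0 := by
  simp [Psing, Pi.single_eq_of_ne h]

/-- The embedding `⊕ₖ M_{p k} → M_N`, `A ↦ ⊕ₖ (A k ⊗ 1_{q k})`. -/
def SbL : ((k : ι) → Matrix (Fin (p k)) (Fin (p k)) ℂ) →ₗ[ℂ]
    Matrix (Σ k : ι, Fin (p k) × Fin (q k)) (Σ k : ι, Fin (p k) × Fin (q k)) ℂ where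
  toFun A := blockDiagonal' fun k => (A k) ⊗ₖ (1 : Matrix (Fin (q k)) (Fin (q k)) ℂ)
  map_add' A B := by
    rw [← blockDiagonal'_add]
    exact congrArg _ (funext fun k => by simp [add_kronecker])
  map_smul' c A := by
    rw [← blockDiagonal'_smul]
    exact congrArg _ (funext fun k => by simp [smul_kronecker])

lemma SbL_apply (A : (k : ι) → Matrix (Fin (p k)) (Fin (p k)) ℂ) :
    SbL p q A = blockDiagonal' fun k => (A k) ⊗ₖ (1 : Matrix (Fin (q k)) (Fin (q k)) ℂ) := rfl

lemma SbL_mul (A B : (k : ι) → Matrix (Fin (p k)) (Fin (p k)) ℂ) :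
    SbL p q A * SbL p q B = SbL p q (fun k => A k * B k) := by
  rw [SbL_apply, SbL_apply, SbL_apply, ← blockDiagonal'_mul]
  exact congrArg _ (funext fun k => by rw [← mul_kronecker_mul, one_mul])

lemma SbL_one : SbL p q (fun _ => 1) = 1 := by
  rw [SbL_apply, ← blockDiagonal'_one]
  exact congrArg _ (funext fun k => one_kronecker_one)

lemma SbL_star (A : (k : ι) → Matrix (Fin (p k)) (Fin (p k)) ℂ) :
    star (SbL p q A) = SbL p q (fun k => star (A k)) := by
  show _ᴴ = _
  rw [SbL_apply, SbL_apply, blockDiagonal'_conjTranspose]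
  exact congrArg _ (funext fun k => (kron_conjTranspose _ _).trans (by rw [conjTranspose_one, Matrix.star_eq_conjTranspose]))

lemma SbL_trace (A : (k : ι) → Matrix (Fin (p k)) (Fin (p k)) ℂ) :
    (SbL p q A).trace = ∑ k, (q k : ℂ) * (A k).trace := by
  rw [SbL_apply, trace_blockDiagonal']
  refine Finset.sum_congr rfl fun k _ => ?_
  rw [trace_kronecker, trace_one, mul_comm]
  simp

lemma Psing_mul_left {k : ι} (C : Matrix (Fin (p k)) (Fin (p k)) ℂ)
    (A : (l : ι) → Matrix (Fin (p l)) (Fin (p l)) ℂ) :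
    (fun l => Psing p k C l * A l) = Psing p k (C * A k) := by
  funext l
  rcases eq_or_ne l k with rfl | h
  · rw [Psing_same, Psing_same]
  · rw [Psing_ne p h, Psing_ne p h, zero_mul]

lemma Psing_mul_Psing_same {k : ι} (C D : Matrix (Fin (p k)) (Fin (p k)) ℂ) :
    (fun l => Psing p k C l * Psing p k D l) = Psing p k (C * D) := by
  rw [Psing_mul_left, Psing_same]

lemma Psing_mul_Psing_ne {k k' : ι} (h : k ≠ k') (C : Matrix (Fin (p k)) (Fin (p k)) ℂ)
    (D : Matrix (Fin (p k')) (Fin (p k')) ℂ) :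
    (fun l => Psing p k C l * Psing p k' D l) =
      fun l => (0 : Matrix (Fin (p l)) (Fin (p l)) ℂ) := by
  funext l
  rcases eq_or_ne l k with rfl | hl
  · rw [Psing_ne p h, mul_zero]
  · rw [Psing_ne p hl, zero_mul]

lemma Psing_star {k : ι} (C : Matrix (Fin (p k)) (Fin (p k)) ℂ) :
    (fun l => star (Psing p k C l)) = Psing p k (star C) := by
  funext l
  rcases eq_or_ne l k with rfl | h
  · rw [Psing_same, Psing_same]
  · rw [Psing_ne p h, Psing_ne p h, star_zero]

lemma Psing_trace_sum (k : ι) (C : Matrix (Fin (p k)) (Fin (p k)) ℂ) :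
    ∑ l, (q l : ℂ) * (Psing p k C l).trace = (q k : ℂ) * C.trace := by
  rw [Finset.sum_eq_single k]
  · rw [Psing_same]
  · intro l _ hl; rw [Psing_ne p hl, Matrix.trace_zero, mul_zero]
  · intro hk; exact absurd (Finset.mem_univ k) hk

lemma Psing_smul (k : ι) (c : ℂ) (C : Matrix (Fin (p k)) (Fin (p k)) ℂ) :
    c • Psing p k C = Psing p k (c • C) := by
  funext l
  rcases eq_or_ne l k with rfl | h
  · rw [Pi.smul_apply, Psing_same, Psing_same]
  · rw [Pi.smul_apply, Psing_ne p h, Psing_ne p h, smul_zero]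

lemma Psing_add (k : ι) (C D : Matrix (Fin (p k)) (Fin (p k)) ℂ) :
    Psing p k C + Psing p k D = Psing p k (C + D) := by
  funext l
  rcases eq_or_ne l k with rfl | h
  · rw [Pi.add_apply, Psing_same, Psing_same, Psing_same]
  · rw [Pi.add_apply, Psing_ne p h, Psing_ne p h, Psing_ne p h, add_zero]

lemma Psing_sum {β : Type*} (s : Finset β) (k : ι) (f : β → Matrix (Fin (p k)) (Fin (p k)) ℂ) :
    ∑ b ∈ s, Psing p k (f b) = Psing p k (∑ b ∈ s, f b) := by
  classical
  induction s using Finset.induction_on with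
  | empty => simp [Psing]
  | insert _ _ hx ih => rw [Finset.sum_insert hx, Finset.sum_insert hx, ih, Psing_add]

lemma sum_Psing_eq (A : (k : ι) → Matrix (Fin (p k)) (Fin (p k)) ℂ) :
    ∑ k, Psing p k (A k) = A := by
  exact Finset.univ_sum_single A



variable {ι : Type} [Fintype ι] [DecidableEq ι] {p q : ι → ℕ} {n : ℕ}

/-- Conjugation-and-reindexing `M ↦ U (reindex M) U*` as a linear map. -/
def Phi (e : (Σ k : ι, Fin (p k) × Fin (q k)) ≃ Fin n) (U : Mat n) :
    Matrix (Σ k : ι, Fin (p k) × Fin (q k)) (Σ k : ι, Fin (p k) × Fin (q k)) ℂ →ₗ[ℂ] Mat n where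
  toFun M := U * (Matrix.reindex e e M) * star U
  map_add' M N := by
    simp [Matrix.reindex_apply, Matrix.submatrix_add, Matrix.mul_add, Matrix.add_mul]
  map_smul' c M := by
    simp [Matrix.reindex_apply, Matrix.submatrix_smul, Matrix.mul_smul, Matrix.smul_mul]

lemma Phi_apply (e : (Σ k : ι, Fin (p k) × Fin (q k)) ≃ Fin n) (U : Mat n) (M) :
    Phi e U M = U * (Matrix.reindex e e M) * star U := rfl

variable (e : (Σ k : ι, Fin (p k) × Fin (q k)) ≃ Fin n) {U : Mat n}

lemma reindex_mul (M N : Matrix (Σ k : ι, Fin (p k) × Fin (q k)) (Σ k : ι, Fin (p k) × Fin (q k)) ℂ) :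
    (Matrix.reindex e e M) * (Matrix.reindex e e N) = Matrix.reindex e e (M * N) := by
  simp only [Matrix.reindex_apply]
  exact Matrix.submatrix_mul_equiv M N _ _ _

lemma Phi_mul (hU2 : star U * U = 1) (M N) :
    Phi e U M * Phi e U N = Phi e U (M * N) := by
  rw [Phi_apply, Phi_apply, Phi_apply, ← reindex_mul e M N]
  have h : U * Matrix.reindex e e M * star U * (U * Matrix.reindex e e N * star U)
      = U * (Matrix.reindex e e M * (star U * U) * Matrix.reindex e e N) * star U := by
    noncomm_ring
  rw [h, hU2, Matrix.mul_one]

lemma Phi_star (M) : star (Phi e U M) = Phi e U (star M) := by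
  simp only [Phi_apply, Matrix.star_eq_conjTranspose, conjTranspose_mul,
    conjTranspose_conjTranspose, Matrix.reindex_apply, Matrix.conjTranspose_submatrix,
    Matrix.mul_assoc]

lemma Phi_trace (hU2 : star U * U = 1) (M) : (Phi e U M).trace = M.trace := by
  rw [Phi_apply, Matrix.trace_mul_cycle, hU2, Matrix.one_mul]
  simp only [Matrix.reindex_apply, Matrix.trace, Matrix.diag, Matrix.submatrix_apply]
  exact Equiv.sum_comp e.symm (fun x => M x x)

lemma Phi_one (hU1 : U * star U = 1) : Phi e U 1 = 1 := by
  rw [Phi_apply, Matrix.reindex_apply, Matrix.submatrix_one_equiv, Matrix.mul_one, hU1]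


lemma sum_smul_std {m : Type*} [DecidableEq m] [Fintype m] (M : Matrix m m ℂ) :
    ∑ y : m × m, M y.1 y.2 • Matrix.single y.1 y.2 (1:ℂ) = M := by
  rw [Fintype.sum_prod_type]
  conv_rhs => rw [matrix_eq_sum_single M]
  refine Finset.sum_congr rfl fun i _ => Finset.sum_congr rfl fun j _ => ?_
  rw [smul_single, smul_eq_mul, mul_one]

lemma exists_good_family {n : ℕ} (𝒜 : StarSubalgebra ℂ (Mat n)) (h : IsHomBalanced 𝒜)
    (hn : 0 < n) :
    ∃ (J : Type) (_ : Fintype J) (_ : DecidableEq J) (A : J → Mat n) (σ : Equiv.Perm J),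
      0 < Fintype.card J ∧
      Fintype.card J = Module.finrank ℂ 𝒜 ∧
      (∀ m, A m ∈ 𝒜) ∧
      (∀ m m', (star (A m) * A m').trace = if m = m' then 1 else 0) ∧
      (∀ X ∈ 𝒜, ∑ m, (star (A m) * X).trace • A m = X) ∧
      (∀ m, A (σ m) = star (A m)) ∧
      ((∑ m, A m * star (A m)) = ((Fintype.card J : ℂ) / (n : ℂ)) • 1) := by
  obtain ⟨ι, hFin, hDec, p, q, e, U, hU1, hU2, hpq, hbal, hmem⟩ := h
  letI := hFin; letI := hDec
  set Ψ : ((k : ι) → Matrix (Fin (p k)) (Fin (p k)) ℂ) →ₗ[ℂ] Mat n :=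
    (Phi e U).comp (SbL p q) with hΨ
  set c : ι → ℂ := fun k => (((Real.sqrt (q k))⁻¹ : ℝ) : ℂ) with hc
  have hcstar : ∀ k, star (c k) = c k := fun k => by
    rw [hc]; exact Complex.conj_ofReal _
  have hkey : ∀ k, (q k : ℂ) * (c k * c k) = 1 := by
    intro k
    have hq : (0:ℝ) < q k := by exact_mod_cast (hpq k).2
    have h1 : ((q k : ℝ) * ((Real.sqrt (q k))⁻¹ * (Real.sqrt (q k))⁻¹) : ℝ) = 1 := by
      rw [← mul_inv, Real.mul_self_sqrt hq.le]
      exact mul_inv_cancel₀ (ne_of_gt hq)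
    calc (q k : ℂ) * (c k * c k)
        = (((q k : ℝ) * ((Real.sqrt (q k))⁻¹ * (Real.sqrt (q k))⁻¹) : ℝ) : ℂ) := by
          rw [hc]; push_cast; ring
      _ = 1 := by rw [h1]; norm_num
  set fam : (Σ k : ι, Fin (p k) × Fin (p k)) → Mat n := fun m =>
    Ψ (Psing p m.1 (c m.1 • Matrix.single m.2.1 m.2.2 1)) with hfam
  have hmulΨ : ∀ A B, Ψ A * Ψ B = Ψ (fun l => A l * B l) := by
    intro A B
    rw [hΨ]
    simp only [LinearMap.comp_apply]
    rw [← SbL_mul, Phi_mul e hU2]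
  have hstarΨ : ∀ A, star (Ψ A) = Ψ (fun l => star (A l)) := by
    intro A
    rw [hΨ]
    simp only [LinearMap.comp_apply]
    rw [Phi_star, SbL_star]
  have htraceΨ : ∀ A, (Ψ A).trace = ∑ k, (q k : ℂ) * (A k).trace := by
    intro A
    rw [hΨ]
    simp only [LinearMap.comp_apply]
    rw [Phi_trace e hU2, SbL_trace]
  have hmemΨ : ∀ A, Ψ A ∈ 𝒜 := by
    intro A
    rw [hmem]
    exact ⟨A, rfl⟩
  have hstarfam : ∀ m, star (fam m) = Ψ (Psing p m.1 (c m.1 • Matrix.single m.2.2 m.2.1 1)) := by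
    rintro ⟨k, i, j⟩
    rw [hfam]
    dsimp only
    rw [hstarΨ, show (fun l => star (Psing p k (c k • Matrix.single i j 1) l))
        = Psing p k (star (c k • Matrix.single i j 1)) from Psing_star p _]
    congr 1
    rw [star_smul, hcstar, Matrix.star_eq_conjTranspose, star_stdBasisMatrix]
  -- orthonormality
  have horto : ∀ m m', (star (fam m) * fam m').trace = if m = m' then 1 else 0 := by
    rintro ⟨k, i, j⟩ ⟨k', i', j'⟩
    rw [hstarfam ⟨k, i, j⟩]
    show (Ψ _ * Ψ _).trace = _
    rw [hmulΨ]
    rcases eq_or_ne k k' with rfl | hkk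
    · rw [show (fun l => Psing p k (c k • Matrix.single j i 1) l *
          Psing p k (c k • Matrix.single i' j' 1) l)
          = Psing p k ((c k • Matrix.single j i 1) * (c k • Matrix.single i' j' 1)) from
          Psing_mul_Psing_same p _ _]
      rw [htraceΨ, Psing_trace_sum, Matrix.smul_mul, Matrix.mul_smul, smul_smul]
      rcases eq_or_ne i i' with rfl | hii
      · rw [Matrix.single_mul_single_same]
        rcases eq_or_ne j j' with rfl | hjj
        · rw [if_pos rfl, Matrix.trace_smul, Matrix.trace_single_eq_same]
          rw [smul_eq_mul, one_mul]
          linear_combination hkey k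
        · rw [if_neg (by simp [hjj]), Matrix.trace_smul,
            Matrix.trace_single_eq_of_ne j j' _ hjj]
          simp
      · rw [Matrix.single_mul_single_of_ne (h := hii), if_neg (by simp [hii])]
        simp
    · rw [show (fun l => Psing p k (c k • Matrix.single j i 1) l *
          Psing p k' (c k' • Matrix.single i' j' 1) l)
          = (fun l => (0 : Matrix (Fin (p l)) (Fin (p l)) ℂ)) from Psing_mul_Psing_ne p hkk _ _,
        show (fun l => (0 : Matrix (Fin (p l)) (Fin (p l)) ℂ))
          = (0 : (l : ι) → Matrix (Fin (p l)) (Fin (p l)) ℂ) from rfl,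
        map_zero, if_neg (fun hh => hkk (congrArg Sigma.fst hh)), Matrix.trace_zero]
  have hmemfam : ∀ m, fam m ∈ 𝒜 := fun m => hmemΨ _
  -- expansion
  have hexp : ∀ X ∈ 𝒜, ∑ m, (star (fam m) * X).trace • fam m = X := by
    intro X hX
    obtain ⟨A, hXA⟩ := (hmem X).mp hX
    have hXA' : X = Ψ A := hXA
    rw [hXA']
    have hterm : ∀ m : (Σ k : ι, Fin (p k) × Fin (p k)), (star (fam m) * Ψ A).trace • fam m
        = Ψ (Psing p m.1 ((A m.1) m.2.1 m.2.2 • Matrix.single m.2.1 m.2.2 1)) := by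
      rintro ⟨k, i, j⟩
      have hco : (star (fam ⟨k,i,j⟩) * Ψ A).trace = (q k : ℂ) * (c k * (A k) i j) := by
        rw [hstarfam ⟨k,i,j⟩]
        show (Ψ _ * Ψ _).trace = _
        rw [hmulΨ, show (fun l => Psing p k (c k • Matrix.single j i 1) l * A l)
            = Psing p k ((c k • Matrix.single j i 1) * A k) from Psing_mul_left p _ _,
          htraceΨ, Psing_trace_sum, Matrix.smul_mul, Matrix.trace_smul,
          trace_stdBasisMatrix_mul, smul_eq_mul]
      rw [hco, hfam]
      dsimp only
      rw [← LinearMap.map_smul, Psing_smul, smul_smul]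
      congr 2
      have h2 : (q k : ℂ) * (c k * (A k) i j) * c k = (A k) i j * ((q k : ℂ) * (c k * c k)) := by
        ring
      rw [h2, hkey, mul_one]
    rw [Finset.sum_congr rfl (fun m _ => hterm m), ← map_sum]
    congr 1
    rw [← Finset.univ_sigma_univ, Finset.sum_sigma]
    rw [Finset.sum_congr rfl (fun k _ => Psing_sum p Finset.univ k _)]
    rw [Finset.sum_congr rfl (fun k _ => congrArg (Psing p k) (sum_smul_std (A k)))]
    exact sum_Psing_eq p A
  -- sum of |A_m|^2
  have hAA : ∀ m : (Σ k : ι, Fin (p k) × Fin (p k)), fam m * star (fam m)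
      = Ψ (Psing p m.1 ((c m.1 * c m.1) • Matrix.single m.2.1 m.2.1 1)) := by
    rintro ⟨k, i, j⟩
    rw [hstarfam ⟨k,i,j⟩, hfam]
    dsimp only
    rw [hmulΨ, show (fun l => Psing p k (c k • Matrix.single i j 1) l *
        Psing p k (c k • Matrix.single j i 1) l)
        = Psing p k ((c k • Matrix.single i j 1) * (c k • Matrix.single j i 1)) from
        Psing_mul_Psing_same p _ _]
    congr 1
    rw [Matrix.smul_mul, Matrix.mul_smul, smul_smul, Matrix.single_mul_single_same, mul_one]
  -- cardinalities
  have hcardN : ∑ k, p k * q k = n := by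
    have h1 : Fintype.card (Σ k : ι, Fin (p k) × Fin (q k)) = Fintype.card (Fin n) :=
      Fintype.card_congr e
    simpa [Fintype.card_sigma, Fintype.card_prod] using h1
  have hcardJ : Fintype.card (Σ k : ι, Fin (p k) × Fin (p k)) = ∑ k, p k * p k := by
    simp [Fintype.card_sigma, Fintype.card_prod]
  have hqd : ∀ k, q k * (∑ l, p l * p l) = p k * n := by
    intro k
    rw [← hcardN, Finset.mul_sum, Finset.mul_sum]
    refine Finset.sum_congr rfl fun l _ => ?_
    have h3 : q k * (p l * p l) = p l * (p l * q k) := by ring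
    rw [h3, hbal l k]
    ring
  have hn0 : (n : ℂ) ≠ 0 := Nat.cast_ne_zero.mpr hn.ne'
  have harith : ∀ k, c k * c k * (p k : ℂ)
      = ((Fintype.card (Σ k : ι, Fin (p k) × Fin (p k)) : ℂ)) / n := by
    intro k
    have hq0 : (q k : ℂ) ≠ 0 := Nat.cast_ne_zero.mpr (hpq k).2.ne'
    have hcc : c k * c k = ((q k : ℂ))⁻¹ := eq_inv_of_mul_eq_one_left (by
      linear_combination hkey k)
    have hcast : (q k : ℂ) * (∑ l, (p l : ℂ) * p l) = (p k : ℂ) * n := by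
      exact_mod_cast hqd k
    rw [hcc, hcardJ]
    push_cast
    rw [inv_mul_eq_div, div_eq_div_iff hq0 hn0]
    linear_combination -hcast
  have hsumAA : (∑ m : (Σ k : ι, Fin (p k) × Fin (p k)), fam m * star (fam m))
      = ((Fintype.card (Σ k : ι, Fin (p k) × Fin (p k)) : ℂ) / (n : ℂ)) • 1 := by
    rw [Finset.sum_congr rfl (fun m _ => hAA m), ← map_sum]
    rw [← Finset.univ_sigma_univ, Finset.sum_sigma]
    rw [Finset.sum_congr rfl (fun k _ => Psing_sum p Finset.univ k _)]
    have hblock : ∀ k, (∑ y : Fin (p k) × Fin (p k),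
        (c k * c k) • Matrix.single y.1 y.1 (1:ℂ))
        = ((Fintype.card (Σ k : ι, Fin (p k) × Fin (p k)) : ℂ) / n) •
          (1 : Matrix (Fin (p k)) (Fin (p k)) ℂ) := by
      intro k
      rw [← Finset.smul_sum, Fintype.sum_prod_type]
      have h6 : ∀ i : Fin (p k), (∑ _j : Fin (p k), Matrix.single i i (1:ℂ))
          = (p k : ℂ) • Matrix.single i i 1 := by
        intro i
        rw [Finset.sum_const, Finset.card_univ, Fintype.card_fin,
          ← Nat.cast_smul_eq_nsmul ℂ]
      rw [Finset.sum_congr rfl (fun i _ => h6 i), ← Finset.smul_sum, sum_stdBasisMatrix_diag,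
        smul_smul, ← harith k]
    rw [Finset.sum_congr rfl (fun k _ => congrArg (Psing p k) (hblock k))]
    rw [Finset.sum_congr rfl (fun k _ => (Psing_smul p k _ _).symm), ← Finset.smul_sum,
      sum_Psing_eq p (fun k => 1), LinearMap.map_smul]
    congr 1
    rw [hΨ]
    simp only [LinearMap.comp_apply]
    rw [SbL_one, Phi_one e hU1]
  -- linear independence and finrank
  have hli : LinearIndependent ℂ fam := by
    rw [Fintype.linearIndependent_iff]
    intro g hg m
    have h5 : (star (fam m) * (∑ m', g m' • fam m')).trace = g m := by
      rw [Matrix.mul_sum, Matrix.trace_sum]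
      rw [Finset.sum_congr rfl (fun m' _ => by
        rw [Matrix.mul_smul, Matrix.trace_smul, horto, smul_eq_mul, mul_ite, mul_one, mul_zero])]
      simp
    rw [hg, Matrix.mul_zero, Matrix.trace_zero] at h5
    exact h5.symm
  have hfinrank : Fintype.card (Σ k : ι, Fin (p k) × Fin (p k)) = Module.finrank ℂ 𝒜 := by
    let v : (Σ k : ι, Fin (p k) × Fin (p k)) → 𝒜 := fun m => ⟨fam m, hmemfam m⟩
    have hliv : LinearIndependent ℂ v :=
      hli.of_comp (Subalgebra.val 𝒜.toSubalgebra).toLinearMap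
    have hsp : ⊤ ≤ Submodule.span ℂ (Set.range v) := by
      rintro ⟨x, hx⟩ _
      have hxe := hexp x hx
      have hxeq : (⟨x, hx⟩ : 𝒜) = ∑ m, (star (fam m) * x).trace • v m := by
        apply Subtype.ext
        rw [AddSubmonoidClass.coe_finset_sum]
        simp only [SetLike.val_smul]
        exact hxe.symm
      rw [hxeq]
      exact Submodule.sum_mem _ fun m _ => Submodule.smul_mem _ _ (Submodule.subset_span ⟨m, rfl⟩)
    have b : Module.Basis (Σ k : ι, Fin (p k) × Fin (p k)) ℂ 𝒜 := Module.Basis.mk hliv hsp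
    rw [Module.finrank_eq_card_basis b]
  have hpos : 0 < Fintype.card (Σ k : ι, Fin (p k) × Fin (p k)) := by
    refine Fintype.card_pos_iff.mpr ?_
    exact ⟨⟨(e.symm ⟨0, hn⟩).1, ⟨0, (hpq _).1⟩, ⟨0, (hpq _).1⟩⟩⟩
  refine ⟨(Σ k : ι, Fin (p k) × Fin (p k)), inferInstance, inferInstance, fam,
    ⟨fun m => ⟨m.1, m.2.2, m.2.1⟩, fun m => ⟨m.1, m.2.2, m.2.1⟩,
      by rintro ⟨k, i, j⟩; rfl, by rintro ⟨k, i, j⟩; rfl⟩,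
    hpos, hfinrank, hmemfam, horto, hexp, ?_, hsumAA⟩
  rintro ⟨k, i, j⟩
  exact (hstarfam ⟨k, i, j⟩).symm

lemma family_comm {n : ℕ} (𝒜 : StarSubalgebra ℂ (Mat n)) {J : Type} [Fintype J]
    (A : J → Mat n) (σ : Equiv.Perm J)
    (hmem : ∀ m, A m ∈ 𝒜)
    (hexp : ∀ X ∈ 𝒜, ∑ m, (star (A m) * X).trace • A m = X)
    (hσ : ∀ m, A (σ m) = star (A m))
    (X Y : Mat n) (hY : Y ∈ 𝒜) :
    Y * (∑ m, A m * X * star (A m)) = (∑ m, A m * X * star (A m)) * Y := by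
  have hY' : ∀ m, Y * A m = ∑ m', (star (A m') * (Y * A m)).trace • A m' :=
    fun m => (hexp _ (mul_mem hY (hmem m))).symm
  have hY'' : ∀ m, star (A m) * Y = ∑ m', (A m' * (star (A m) * Y)).trace • star (A m') := by
    intro m
    calc star (A m) * Y
        = ∑ m', (star (A m') * (star (A m) * Y)).trace • A m' :=
          (hexp _ (mul_mem (star_mem (hmem m)) hY)).symm
      _ = ∑ m', (star (A (σ m')) * (star (A m) * Y)).trace • A (σ m') :=
          (Equiv.sum_comp σ _).symm
      _ = ∑ m', (A m' * (star (A m) * Y)).trace • star (A m') := by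
          refine Finset.sum_congr rfl fun m' _ => ?_
          rw [hσ m', star_star]
  have lhs_eq : Y * (∑ m, A m * X * star (A m))
      = ∑ m, ∑ m', (star (A m') * (Y * A m)).trace • (A m' * X * star (A m)) := by
    rw [Finset.mul_sum]
    refine Finset.sum_congr rfl fun m _ => ?_
    calc Y * (A m * X * star (A m)) = (Y * A m) * (X * star (A m)) := by noncomm_ring
      _ = (∑ m', (star (A m') * (Y * A m)).trace • A m') * (X * star (A m)) := by rw [← hY' m]
      _ = ∑ m', (star (A m') * (Y * A m)).trace • (A m' * X * star (A m)) := by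
          rw [Finset.sum_mul]
          exact Finset.sum_congr rfl fun m' _ => by
            rw [Matrix.smul_mul, Matrix.mul_assoc]
  have rhs_eq : (∑ m, A m * X * star (A m)) * Y
      = ∑ m, ∑ m', (A m' * (star (A m) * Y)).trace • (A m * X * star (A m')) := by
    rw [Finset.sum_mul]
    refine Finset.sum_congr rfl fun m _ => ?_
    calc (A m * X * star (A m)) * Y = (A m * X) * (star (A m) * Y) := by noncomm_ring
      _ = (A m * X) * (∑ m', (A m' * (star (A m) * Y)).trace • star (A m')) := by rw [← hY'' m]
      _ = ∑ m', (A m' * (star (A m) * Y)).trace • (A m * X * star (A m')) := by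
          rw [Finset.mul_sum]
          exact Finset.sum_congr rfl fun m' _ => by
            rw [Matrix.mul_smul, Matrix.mul_assoc]
  rw [lhs_eq, rhs_eq, Finset.sum_comm]
  refine Finset.sum_congr rfl fun m _ => Finset.sum_congr rfl fun m' _ => ?_
  congr 1
  rw [← Matrix.mul_assoc, Matrix.trace_mul_cycle, ← Matrix.mul_assoc]

lemma comp_sum_endo {J : Type} [Fintype J] {n : ℕ} (f : Mat n →ₗ[ℂ] Mat n)
    (g : J → (Mat n →ₗ[ℂ] Mat n)) : f ∘ₗ (∑ j, g j) = ∑ j, f ∘ₗ g j := by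
  refine LinearMap.ext fun X => ?_
  simp

lemma sum_comp_endo {J : Type} [Fintype J] {n : ℕ} (f : J → (Mat n →ₗ[ℂ] Mat n))
    (g : Mat n →ₗ[ℂ] Mat n) : (∑ j, f j) ∘ₗ g = ∑ j, f j ∘ₗ g := by
  refine LinearMap.ext fun X => ?_
  simp

lemma proj_formulas {n : ℕ} (𝒜 : StarSubalgebra ℂ (Mat n)) {J : Type} [Fintype J]
    [DecidableEq J] (A : J → Mat n) (σ : Equiv.Perm J) (hn : 0 < n)
    (hcard : 0 < Fintype.card J)
    (hmem : ∀ m, A m ∈ 𝒜)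
    (horto : ∀ m m', (star (A m) * A m').trace = if m = m' then 1 else 0)
    (hexp : ∀ X ∈ 𝒜, ∑ m, (star (A m) * X).trace • A m = X)
    (hσ : ∀ m, A (σ m) = star (A m))
    (hAA : (∑ m, A m * star (A m)) = ((Fintype.card J : ℂ) / (n : ℂ)) • 1)
    {E E' : Mat n →ₗ[ℂ] Mat n}
    (hE : IsHSProj (Subalgebra.toSubmodule 𝒜.toSubalgebra) E)
    (hE' : IsHSProj (Subalgebra.toSubmodule
      (Subalgebra.centralizer ℂ (𝒜 : Set (Mat n)))) E') :
    E = ∑ m, rko (A m) (A m) ∧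
      E' = ((n : ℂ) / (Fintype.card J : ℂ)) • ∑ m, lrm (A m) (star (A m)) := by
  have hn0 : (n : ℂ) ≠ 0 := Nat.cast_ne_zero.mpr hn.ne'
  have hd0 : ((Fintype.card J : ℂ)) ≠ 0 := Nat.cast_ne_zero.mpr hcard.ne'
  constructor
  · refine hsproj_unique hE ⟨?_, ?_, ?_⟩
    · intro X
      rw [Subalgebra.mem_toSubmodule]
      simp only [LinearMap.sum_apply, rko_apply]
      exact sum_mem fun m _ => SMulMemClass.smul_mem _ (hmem m)
    · intro X hX
      rw [Subalgebra.mem_toSubmodule] at hX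
      simp only [LinearMap.sum_apply, rko_apply]
      exact hexp X hX
    · intro X Y
      simp only [LinearMap.sum_apply, rko_apply]
      rw [star_sum, Finset.sum_mul, Matrix.mul_sum, Matrix.trace_sum, Matrix.trace_sum]
      refine Finset.sum_congr rfl fun m _ => ?_
      rw [star_smul, Matrix.smul_mul, Matrix.mul_smul, Matrix.trace_smul, Matrix.trace_smul,
        smul_eq_mul, smul_eq_mul]
      rw [trace_star_mul_conj (A m) X, Complex.star_def, Complex.conj_conj]
      ring
  · refine hsproj_unique hE' ⟨?_, ?_, ?_⟩
    · intro X
      rw [Subalgebra.mem_toSubmodule, Subalgebra.mem_centralizer_iff]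
      intro Y hY
      simp only [LinearMap.smul_apply, LinearMap.sum_apply, lrm_apply]
      rw [Matrix.mul_smul, Matrix.smul_mul]
      congr 1
      exact family_comm 𝒜 A σ hmem hexp hσ X Y hY
    · intro X hX
      rw [Subalgebra.mem_toSubmodule, Subalgebra.mem_centralizer_iff] at hX
      simp only [LinearMap.smul_apply, LinearMap.sum_apply, lrm_apply]
      have hc : ∀ m, A m * X * star (A m) = (A m * star (A m)) * X := by
        intro m
        rw [Matrix.mul_assoc, Matrix.mul_assoc]
        congr 1
        exact (hX (star (A m)) (star_mem (hmem m))).symm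
      rw [Finset.sum_congr rfl fun m _ => hc m, ← Finset.sum_mul, hAA, Matrix.smul_mul,
        Matrix.one_mul, smul_smul]
      have hone : (n : ℂ) / (Fintype.card J : ℂ) * ((Fintype.card J : ℂ) / (n : ℂ)) = 1 := by
        field_simp
      rw [hone, one_smul]
    · intro X Y
      simp only [LinearMap.smul_apply, LinearMap.sum_apply, lrm_apply]
      rw [star_smul, Matrix.smul_mul, Matrix.mul_smul, Matrix.trace_smul, Matrix.trace_smul]
      congr 1
      · rw [Complex.star_def, map_div₀, Complex.conj_natCast, Complex.conj_natCast]
      rw [star_sum, Finset.sum_mul, Matrix.mul_sum, Matrix.trace_sum, Matrix.trace_sum]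
      rw [← Equiv.sum_comp σ (fun m => (star (A m * X * star (A m)) * Y).trace)]
      refine Finset.sum_congr rfl fun m _ => ?_
      rw [hσ m]
      simp only [Matrix.star_mul, star_star]
      rw [show star (A m) * (star X * A m) * Y = star (A m) * ((star X * A m) * Y) from by
          noncomm_ring,
        Matrix.trace_mul_comm,
        show (star X * A m) * Y * star (A m) = star X * (A m * Y * star (A m)) from by
          noncomm_ring]

end Stmt18

/-- for homogeneously balanced `𝒜, ℬ ⊆ M_n(ℂ)`,
`c(𝒜',ℬ') = (n² / (dim 𝒜 · dim ℬ)) · c(𝒜,ℬ)` where `c(𝒳,𝒴) = Tr(E_𝒳 E_𝒴)`. -/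
theorem stmt18 {n : ℕ} (𝒜 ℬ : StarSubalgebra ℂ (Mat n))
    (hA : IsHomBalanced 𝒜) (hB : IsHomBalanced ℬ)
    (EA EB EA' EB' : Mat n →ₗ[ℂ] Mat n)
    (hEA : IsHSProj (Subalgebra.toSubmodule 𝒜.toSubalgebra) EA)
    (hEB : IsHSProj (Subalgebra.toSubmodule ℬ.toSubalgebra) EB)
    (hEA' : IsHSProj (Subalgebra.toSubmodule
      (Subalgebra.centralizer ℂ (𝒜 : Set (Mat n)))) EA')
    (hEB' : IsHSProj (Subalgebra.toSubmodule
      (Subalgebra.centralizer ℂ (ℬ : Set (Mat n)))) EB') :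
    LinearMap.trace ℂ (Mat n) (EA' ∘ₗ EB') =
      ((n : ℂ) ^ 2 / ((Module.finrank ℂ 𝒜 : ℂ) * (Module.finrank ℂ ℬ : ℂ))) *
        LinearMap.trace ℂ (Mat n) (EA ∘ₗ EB) := by
  rcases Nat.eq_zero_or_pos n with hn | hn
  · subst hn
    have hsub : ∀ M N : Mat 0, M = N := fun M N => by
      ext i j
      exact i.elim0
    have h1 : EA' ∘ₗ EB' = 0 := LinearMap.ext fun X => hsub _ _
    have h2 : EA ∘ₗ EB = 0 := LinearMap.ext fun X => hsub _ _
    simp [h1, h2]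
  · obtain ⟨JA, hFA, hDA, A, σA, hposA, hrkA, hmemA, hortA, hexpA, hσA, hAAA⟩ :=
      Stmt18.exists_good_family 𝒜 hA hn
    obtain ⟨JB, hFB, hDB, B, σB, hposB, hrkB, hmemB, hortB, hexpB, hσB, hAAB⟩ :=
      Stmt18.exists_good_family ℬ hB hn
    letI := hFA; letI := hDA; letI := hFB; letI := hDB
    obtain ⟨hEAeq, hEA'eq⟩ :=
      Stmt18.proj_formulas 𝒜 A σA hn hposA hmemA hortA hexpA hσA hAAA hEA hEA'
    obtain ⟨hEBeq, hEB'eq⟩ :=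
      Stmt18.proj_formulas ℬ B σB hn hposB hmemB hortB hexpB hσB hAAB hEB hEB'
    have hT' : LinearMap.trace ℂ (Mat n) (EA' ∘ₗ EB')
        = (((n : ℂ)/(Fintype.card JA : ℂ)) * ((n : ℂ)/(Fintype.card JB : ℂ))) *
          ∑ m, ∑ j, (A m * B j).trace * (star (B j) * star (A m)).trace := by
      rw [hEA'eq, hEB'eq, LinearMap.smul_comp, LinearMap.comp_smul, smul_smul,
        _root_.map_smul, Stmt18.sum_comp_endo,
        Finset.sum_congr rfl (fun m _ => Stmt18.comp_sum_endo _ _)]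
      simp only [map_sum]
      rw [Finset.sum_congr rfl (fun m (_ : m ∈ Finset.univ) => Finset.sum_congr rfl
        (fun j (_ : j ∈ Finset.univ) => by
          rw [Stmt18.lrm_comp, Stmt18.trace_lrm]))]
      rw [smul_eq_mul]
    have hT : LinearMap.trace ℂ (Mat n) (EA ∘ₗ EB)
        = ∑ m, ∑ j, (star (A m) * B j).trace * (star (B j) * A m).trace := by
      rw [hEAeq, hEBeq, Stmt18.sum_comp_endo,
        Finset.sum_congr rfl (fun m _ => Stmt18.comp_sum_endo _ _)]
      simp only [map_sum]
      refine Finset.sum_congr rfl (fun m _ => Finset.sum_congr rfl (fun j _ => ?_))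
      rw [Stmt18.rko_comp, _root_.map_smul, Stmt18.trace_rko, smul_eq_mul]
    have hSS : (∑ m, ∑ j, (A m * B j).trace * (star (B j) * star (A m)).trace)
        = ∑ m, ∑ j, (star (A m) * B j).trace * (star (B j) * A m).trace := by
      rw [← Equiv.sum_comp σA
        (fun m => ∑ j, (A m * B j).trace * (star (B j) * star (A m)).trace)]
      refine Finset.sum_congr rfl (fun m _ => Finset.sum_congr rfl (fun j _ => ?_))
      rw [hσA m, star_star]
    have hcA : ((Fintype.card JA : ℕ) : ℂ) = (Module.finrank ℂ 𝒜 : ℂ) := by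
      exact_mod_cast congrArg Nat.cast hrkA
    have hcB : ((Fintype.card JB : ℕ) : ℂ) = (Module.finrank ℂ ℬ : ℂ) := by
      exact_mod_cast congrArg Nat.cast hrkB
    rw [hT', hT, hSS, ← hcA, ← hcB]
    have hdA0 : ((Fintype.card JA : ℕ) : ℂ) ≠ 0 := Nat.cast_ne_zero.mpr hposA.ne'
    have hdB0 : ((Fintype.card JB : ℕ) : ℂ) ≠ 0 := Nat.cast_ne_zero.mpr hposB.ne'
    rw [div_mul_div_comm, ← sq]
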